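/- Identification under strategic misreporting (Appendix B): suppose (δ, p) ∈ [0,1] × [0,1] generates the treatment distribution P₁ from the control distribution P₀ via the strategic-misreporting model, and suppose P₀(0) > 0, P₀(J) > 0, and P₁(J+1) > 0. Then δ and p are uniquely determined by the observed distributions: δ = 1 − P₁(0)/P₀(0), δ > 0, and p = 1 − P₁(J+1)/(δ·P₀(J)). -/

import Mathlib

/-- Identification under strategic misreporting: if `(δ, p)` generates the treatment
distribution `P₁` from the control distribution `P₀` via the strategic-misreporting model
and `P₀(0) > 0`, `P₀(J) > 0`, `P₁(J+1) > 0`, then `δ = 1 − P₁(0)/P₀(0)`, `δ > 0`, and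
`p = 1 − P₁(J+1)/(δ·P₀(J))`. -/
theorem strategic_misreporting_identification
    (J : ℕ) (hJ : 1 ≤ J)
    (P₀ P₁ : ℤ → ℝ)
    (hP₀nonneg : ∀ j : ℤ, 0 ≤ j → j ≤ (J : ℤ) → 0 ≤ P₀ j)
    (hP₀sum : ∑ j ∈ Finset.Icc (0 : ℤ) (J : ℤ), P₀ j = 1)
    (hP₀neg : P₀ (-1) = 0)
    (δ p : ℝ) (hδ : 0 ≤ δ ∧ δ ≤ 1) (hp : 0 ≤ p ∧ p ≤ 1)
    (hP₁low : ∀ j : ℤ, 0 ≤ j → j ≤ (J : ℤ) - 1 →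
      P₁ j = (1 - δ) * P₀ j + δ * P₀ (j - 1))
    (hP₁J : P₁ (J : ℤ) =
      (1 - δ) * P₀ (J : ℤ) + δ * P₀ ((J : ℤ) - 1) + δ * p * P₀ (J : ℤ))
    (hP₁top : P₁ ((J : ℤ) + 1) = δ * (1 - p) * P₀ (J : ℤ))
    (h0pos : 0 < P₀ 0) (hJpos : 0 < P₀ (J : ℤ)) (htoppos : 0 < P₁ ((J : ℤ) + 1)) :
    δ = 1 - P₁ 0 / P₀ 0 ∧ 0 < δ ∧ p = 1 - P₁ ((J : ℤ) + 1) / (δ * P₀ (J : ℤ)) := by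
  have h0 : P₁ 0 = (1 - δ) * P₀ 0 := by
    have := hP₁low 0 le_rfl (by omega)
    simpa [hP₀neg] using this
  have hδpos : 0 < δ := by
    by_contra h
    push_neg at h
    have : δ = 0 := le_antisymm h hδ.1
    rw [hP₁top, this] at htoppos
    simp at htoppos
  refine ⟨?_, hδpos, ?_⟩
  · field_simp [h0]
    rw [h0]; ring
  · rw [hP₁top]
    field_simp
    ring
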